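/- arXiv:1804.00531 — 4 statements merged into one kernel-verified Lean document; each statement's English description precedes it below -/
import Mathlib

section
/- Let H be a real Hilbert space, let (u_k) be a bounded sequence in H, and let (g_k^{(n)})_{n ∈ ℕ} be sequences of unitary operators on H such that for m ≠ n, (g_k^{(m)})^{-1} g_k^{(n)} converges to 0 in the weak operator topology as k → ∞. Suppose for each n the sequence (g_k^{(n)})^{-1} u_k converges weakly to w^{(n)} ∈ H. Then ∑_{n} ‖w^{(n)}‖² ≤ limsup_k ‖u_k‖². -/
open Filter

/-- Plancherel-type inequality: if the unitary sequences (g_k^{(n)}) are pairwise decoupled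
and (g_k^{(n)})⁻¹ u_k ⇀ w^{(n)}, then ∑ ‖w^{(n)}‖² ≤ limsup ‖u_k‖². -/
theorem profile_plancherel_inequality {H : Type*} [NormedAddCommGroup H]
    [InnerProductSpace ℝ H]
    (u : ℕ → H) (hb : ∃ c : ℝ, ∀ k, ‖u k‖ ≤ c)
    (g : ℕ → ℕ → (H ≃ₗᵢ[ℝ] H)) (w : ℕ → H)
    (hdec : ∀ m n : ℕ, m ≠ n → ∀ x y : H,
      Tendsto (fun k => (inner ℝ ((g k m).symm ((g k n) x)) y : ℝ)) atTop (nhds 0))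
    (hw : ∀ (n : ℕ) (x : H),
      Tendsto (fun k => (inner ℝ ((g k n).symm (u k)) x : ℝ)) atTop (nhds (inner ℝ (w n) x))) :
    ∑' n, ‖w n‖ ^ 2 ≤ Filter.limsup (fun k => ‖u k‖ ^ 2) atTop := by
  obtain ⟨c, hc⟩ := hb
  set L := Filter.limsup (fun k => ‖u k‖ ^ 2) atTop with hLdef
  have hBdd : IsBoundedUnder (· ≤ ·) atTop (fun k => ‖u k‖ ^ 2) :=
    isBoundedUnder_of ⟨c ^ 2, fun k => by
      have h1 := hc k; have h2 := norm_nonneg (u k); nlinarith⟩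
  have key : ∀ F : Finset ℕ, ∑ n ∈ F, ‖w n‖ ^ 2 ≤ L := by
    intro F
    set b : ℕ → ℝ := fun k =>
      2 * ∑ n ∈ F, (inner ℝ ((g k n).symm (u k)) (w n) : ℝ)
        - ∑ n ∈ F, ∑ m ∈ F, (inner ℝ ((g k m).symm ((g k n) (w n))) (w m) : ℝ) with hbdef
    -- b k ≤ ‖u k‖ ^ 2
    have hble : ∀ k, b k ≤ ‖u k‖ ^ 2 := by
      intro k
      set S := ∑ n ∈ F, (g k n) (w n) with hS
      have h0 : (0 : ℝ) ≤ ‖u k - S‖ ^ 2 := sq_nonneg _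
      have hexp : ‖u k - S‖ ^ 2
          = ‖u k‖ ^ 2 - 2 * (inner ℝ (u k) S : ℝ) + ‖S‖ ^ 2 := norm_sub_sq_real _ _
      have hinner : (inner ℝ (u k) S : ℝ)
          = ∑ n ∈ F, (inner ℝ ((g k n).symm (u k)) (w n) : ℝ) := by
        rw [hS, inner_sum]
        refine Finset.sum_congr rfl fun n _ => ?_
        conv_lhs => rw [← (g k n).apply_symm_apply (u k)]
        exact (g k n).inner_map_map _ _
      have hnormS : ‖S‖ ^ 2
          = ∑ n ∈ F, ∑ m ∈ F, (inner ℝ ((g k m).symm ((g k n) (w n))) (w m) : ℝ) := by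
        rw [← real_inner_self_eq_norm_sq, hS, sum_inner]
        refine Finset.sum_congr rfl fun n _ => ?_
        rw [inner_sum]
        refine Finset.sum_congr rfl fun m _ => ?_
        conv_lhs => rw [← (g k m).apply_symm_apply ((g k n) (w n))]
        exact (g k m).inner_map_map _ _
      rw [hexp, hinner, hnormS] at h0
      rw [hbdef]
      dsimp only
      linarith
    -- b tends to ∑ n ∈ F, ‖w n‖ ^ 2
    have hb1 : Tendsto (fun k => ∑ n ∈ F, (inner ℝ ((g k n).symm (u k)) (w n) : ℝ))
        atTop (nhds (∑ n ∈ F, (inner ℝ (w n) (w n) : ℝ))) :=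
      tendsto_finset_sum _ fun n _ => hw n (w n)
    have hb2 : Tendsto
        (fun k => ∑ n ∈ F, ∑ m ∈ F, (inner ℝ ((g k m).symm ((g k n) (w n))) (w m) : ℝ))
        atTop (nhds (∑ n ∈ F, (inner ℝ (w n) (w n) : ℝ))) := by
      have : ∀ n ∈ F, Tendsto
          (fun k => ∑ m ∈ F, (inner ℝ ((g k m).symm ((g k n) (w n))) (w m) : ℝ))
          atTop (nhds (∑ m ∈ F, if m = n then (inner ℝ (w n) (w n) : ℝ) else 0)) := by
        intro n hn
        refine tendsto_finset_sum _ fun m hm => ?_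
        by_cases hmn : m = n
        · subst hmn
          simp only [if_pos rfl]
          have : ∀ k, (inner ℝ ((g k m).symm ((g k m) (w m))) (w m) : ℝ)
              = (inner ℝ (w m) (w m) : ℝ) := fun k => by
            rw [(g k m).symm_apply_apply]
          simp only [this]
          exact tendsto_const_nhds
        · simp only [if_neg hmn]
          exact hdec m n hmn (w n) (w m)
      have heq : ∀ n ∈ F, (∑ m ∈ F, if m = n then (inner ℝ (w n) (w n) : ℝ) else 0)
          = (inner ℝ (w n) (w n) : ℝ) := by
        intro n hn
        rw [Finset.sum_ite_eq' F n (fun _ => (inner ℝ (w n) (w n) : ℝ))]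
        simp [hn]
      have h2' := tendsto_finset_sum F this
      have heq2 : (∑ n ∈ F, ∑ m ∈ F, if m = n then (inner ℝ (w n) (w n) : ℝ) else 0)
          = ∑ n ∈ F, (inner ℝ (w n) (w n) : ℝ) := Finset.sum_congr rfl heq
      rwa [heq2] at h2'
    have hbt : Tendsto b atTop (nhds (∑ n ∈ F, ‖w n‖ ^ 2)) := by
      have h := (hb1.const_mul 2).sub hb2
      have : 2 * (∑ n ∈ F, (inner ℝ (w n) (w n) : ℝ)) - (∑ n ∈ F, (inner ℝ (w n) (w n) : ℝ))
          = ∑ n ∈ F, ‖w n‖ ^ 2 := by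
        rw [two_mul]
        ring_nf
        exact Finset.sum_congr rfl fun n _ => real_inner_self_eq_norm_sq (w n)
      rw [← this]
      exact h
    -- conclude via limsup comparison
    have hcb : IsCoboundedUnder (· ≤ ·) atTop b := hbt.isCoboundedUnder_le
    have hmono : b ≤ᶠ[atTop] fun k => ‖u k‖ ^ 2 :=
      Filter.Eventually.of_forall hble
    calc ∑ n ∈ F, ‖w n‖ ^ 2 = Filter.limsup b atTop := (hbt.limsup_eq).symm
      _ ≤ L := limsup_le_limsup hmono hcb hBdd
  have hsum : Summable fun n => ‖w n‖ ^ 2 :=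
    summable_of_sum_le (fun n => sq_nonneg _) key
  exact Summable.tsum_le_of_sum_le hsum key
end

section
/- Let H be a real Hilbert space, (u_k) a bounded sequence in H converging weakly to w, and (g_k) a sequence of unitary operators on H converging to 0 in the weak operator topology such that g_k^{-1} u_k ⇀ v. Then ‖w‖² + ‖v‖² ≤ limsup_k ‖u_k‖². -/
open Filter

/-- If u_k ⇀ w, g_k → 0 in the weak operator topology (g_k unitary), and g_k⁻¹ u_k ⇀ v,
then ‖w‖² + ‖v‖² ≤ limsup ‖u_k‖². -/
theorem two_profile_inequality {H : Type*} [NormedAddCommGroup H] [InnerProductSpace ℝ H]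
    (u : ℕ → H) (hb : ∃ c : ℝ, ∀ k, ‖u k‖ ≤ c) (w v : H)
    (g : ℕ → (H ≃ₗᵢ[ℝ] H))
    (hwk : ∀ x : H, Tendsto (fun k => (inner ℝ (u k) x : ℝ)) atTop (nhds (inner ℝ w x)))
    (hg0 : ∀ x y : H, Tendsto (fun k => (inner ℝ ((g k) x) y : ℝ)) atTop (nhds 0))
    (hv : ∀ x : H, Tendsto (fun k => (inner ℝ ((g k).symm (u k)) x : ℝ)) atTop (nhds (inner ℝ v x))) :
    ‖w‖ ^ 2 + ‖v‖ ^ 2 ≤ Filter.limsup (fun k => ‖u k‖ ^ 2) atTop := by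
  set b : ℕ → ℝ := fun k =>
    2 * (inner ℝ (u k) w : ℝ) + 2 * (inner ℝ ((g k).symm (u k)) v : ℝ)
      - 2 * (inner ℝ ((g k) v) w : ℝ) - ‖w‖ ^ 2 - ‖v‖ ^ 2 with hbdef
  have htend : Tendsto b atTop (nhds (‖w‖ ^ 2 + ‖v‖ ^ 2)) := by
    have h1 := (hwk w).const_mul 2
    have h2 := (hv v).const_mul 2
    have h3 := (hg0 v w).const_mul 2
    have := ((h1.add h2).sub h3).sub_const (‖w‖ ^ 2)
    have := this.sub_const (‖v‖ ^ 2)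
    convert this using 2
    simp [real_inner_self_eq_norm_sq]
    ring
  have hle : ∀ k, b k ≤ ‖u k‖ ^ 2 := by
    intro k
    have h0 : (0:ℝ) ≤ ‖u k - w - (g k) v‖ ^ 2 := by positivity
    have hexp : ‖u k - w - (g k) v‖ ^ 2 =
        ‖u k‖ ^ 2 + ‖w‖ ^ 2 + ‖v‖ ^ 2 - 2 * (inner ℝ (u k) w : ℝ)
          - 2 * (inner ℝ (u k) ((g k) v) : ℝ) + 2 * (inner ℝ w ((g k) v) : ℝ) := by
      have := real_inner_self_eq_norm_sq (u k - w - (g k) v)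
      have hgv : ‖(g k) v‖ = ‖v‖ := (g k).norm_map v
      simp only [inner_sub_left, inner_sub_right] at this
      rw [← this]
      simp [real_inner_self_eq_norm_sq, hgv, real_inner_comm]
      ring
    have hinner : (inner ℝ ((g k).symm (u k)) v : ℝ) = (inner ℝ (u k) ((g k) v) : ℝ) := by
      rw [← (g k).inner_map_map ((g k).symm (u k)) v, (g k).apply_symm_apply]
    have hcomm : (inner ℝ ((g k) v) w : ℝ) = (inner ℝ w ((g k) v) : ℝ) := real_inner_comm _ _
    rw [hbdef]
    simp only [hinner, hcomm]
    nlinarith [h0, hexp]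
  have hbound : IsBoundedUnder (· ≤ ·) atTop (fun k => ‖u k‖ ^ 2) := by
    obtain ⟨c, hc⟩ := hb
    refine ⟨c ^ 2, eventually_map.2 (Eventually.of_forall fun k => ?_)⟩
    have := hc k
    nlinarith [norm_nonneg (u k)]
  have hco : IsCoboundedUnder (· ≤ ·) atTop b := htend.isCoboundedUnder_le
  calc ‖w‖ ^ 2 + ‖v‖ ^ 2 = limsup b atTop := (htend.limsup_eq).symm
    _ ≤ limsup (fun k => ‖u k‖ ^ 2) atTop :=
        limsup_le_limsup (Eventually.of_forall hle) hco hbound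
end

section
/- Let (Ω, μ) be a measure space, p ∈ (1, ∞), and let (u_k) be a bounded sequence in L^p(Ω, μ) converging μ-almost everywhere to a function u. Then ∫ |u_k|^p dμ − ∫ |u_k − u|^p dμ → ∫ |u|^p dμ (the Brezis–Lieb lemma). -/
open Filter MeasureTheory
open scoped ENNReal

lemma bl_mvt {p : ℝ} (hp : 1 ≤ p) {x y : ℝ} (hx : 0 ≤ x) (hy : 0 ≤ y) :
    abs (y ^ p - x ^ p) ≤ p * (max x y) ^ (p - 1) * abs (y - x) := by
  have hp0 : 0 < p := lt_of_lt_of_le one_pos hp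
  have key : ∀ t ∈ Set.Icc (min x y) (max x y),
      HasDerivWithinAt (fun s : ℝ => s ^ p) (p * t ^ (p - 1)) (Set.Icc (min x y) (max x y)) t :=
    fun t _ => (Real.hasDerivAt_rpow_const (Or.inr hp)).hasDerivWithinAt
  have bound : ∀ t ∈ Set.Icc (min x y) (max x y),
      ‖p * t ^ (p - 1)‖ ≤ p * (max x y) ^ (p - 1) := by
    intro t ht
    have ht0 : 0 ≤ t := le_trans (le_min hx hy) ht.1
    rw [Real.norm_eq_abs, abs_mul, abs_of_pos hp0, abs_of_nonneg (Real.rpow_nonneg ht0 _)]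
    exact mul_le_mul_of_nonneg_left
      (Real.rpow_le_rpow ht0 ht.2 (by linarith)) hp0.le
  have := (convex_Icc (min x y) (max x y)).norm_image_sub_le_of_norm_hasDerivWithin_le
    key bound ⟨min_le_left x y, le_max_left x y⟩ ⟨min_le_right x y, le_max_right x y⟩
  simpa [Real.norm_eq_abs, abs_sub_comm] using this

/-- Young-type: s^(p-1) * t ≤ δ s^p + δ^(1-p) t^p for s,t ≥ 0, t ≠ 0. -/
lemma bl_young {p δ : ℝ} (hp : 1 < p) (hδ : 0 < δ) {s t : ℝ} (hs : 0 ≤ s) (ht : 0 < t) :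
    s ^ (p - 1) * t ≤ δ * s ^ p + δ ^ (1 - p) * t ^ p := by
  rcases le_or_gt t (δ * s) with h | h
  · have hs0 : 0 < s := by nlinarith
    have h1 : s ^ (p - 1) * t ≤ s ^ (p - 1) * (δ * s) :=
      mul_le_mul_of_nonneg_left h (Real.rpow_nonneg hs _)
    have h2 : s ^ (p - 1) * s = s ^ p := by
      rw [← Real.rpow_add_one hs0.ne']; ring_nf
    have : s ^ (p - 1) * (δ * s) = δ * s ^ p := by rw [← h2]; ring
    calc s ^ (p - 1) * t ≤ δ * s ^ p := by rw [← this]; exact h1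
      _ ≤ δ * s ^ p + δ ^ (1 - p) * t ^ p := by
          have : 0 ≤ δ ^ (1 - p) * t ^ p := by positivity
          linarith
  · have hst : s ≤ t / δ := by rw [le_div_iff₀ hδ]; nlinarith
    have h1 : s ^ (p - 1) ≤ (t / δ) ^ (p - 1) :=
      Real.rpow_le_rpow hs hst (by linarith)
    have h2 : (t / δ) ^ (p - 1) * t = δ ^ (1 - p) * t ^ p := by
      rw [Real.div_rpow ht.le hδ.le, div_mul_eq_mul_div, ← Real.rpow_add_one ht.ne',
        div_eq_mul_inv, ← Real.rpow_neg hδ.le]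
      ring_nf
    calc s ^ (p - 1) * t ≤ (t / δ) ^ (p - 1) * t := mul_le_mul_of_nonneg_right h1 ht.le
      _ = δ ^ (1 - p) * t ^ p := h2
      _ ≤ δ * s ^ p + δ ^ (1 - p) * t ^ p := by
          have : 0 ≤ δ * s ^ p := by positivity
          linarith

lemma bl_key {p : ℝ} (hp : 1 < p) {ε : ℝ} (hε : 0 < ε) :
    ∃ C : ℝ, 0 < C ∧ ∀ a b : ℝ,
      abs (|a + b| ^ p - |a| ^ p) ≤ ε * |a| ^ p + C * |b| ^ p := by
  have hp0 : 0 < p := by linarith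
  have h2 : (0:ℝ) < p * 2 ^ (p - 1) := by positivity
  set δ : ℝ := ε / (p * 2 ^ (p - 1)) with hδdef
  have hδ : 0 < δ := by positivity
  refine ⟨p * 2 ^ (p - 1) * (δ ^ (1 - p) + 1), by positivity, fun a b => ?_⟩
  rcases eq_or_ne b 0 with rfl | hb
  · simp; positivity
  have hbabs : 0 < |b| := abs_pos.mpr hb
  -- MVT bound
  have hmax : max |a| |a + b| ≤ |a| + |b| := by
    exact max_le (le_add_of_nonneg_right (abs_nonneg b)) (abs_add_le a b)
  have hmvt : abs (|a + b| ^ p - |a| ^ p) ≤ p * (|a| + |b|) ^ (p - 1) * |b| := by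
    calc abs (|a + b| ^ p - |a| ^ p)
        ≤ p * (max |a| |a + b|) ^ (p - 1) * abs (|a + b| - |a|) :=
          bl_mvt hp.le (abs_nonneg a) (abs_nonneg (a + b))
      _ ≤ p * (|a| + |b|) ^ (p - 1) * |b| := by
          apply mul_le_mul
          · exact mul_le_mul_of_nonneg_left
              (Real.rpow_le_rpow (le_max_of_le_left (abs_nonneg a)) hmax (by linarith)) hp0.le
          · have := abs_abs_sub_abs_le_abs_sub (a + b) a
            simpa using this
          · exact abs_nonneg _
          · positivity
  -- (|a|+|b|)^(p-1) ≤ 2^(p-1) * (|a|^(p-1) + |b|^(p-1))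
  have hsum : (|a| + |b|) ^ (p - 1) ≤ 2 ^ (p - 1) * (|a| ^ (p - 1) + |b| ^ (p - 1)) := by
    have h1 : |a| + |b| ≤ 2 * max |a| |b| := by
      rcases max_cases |a| |b| with ⟨h, h'⟩ | ⟨h, h'⟩ <;> rw [h] <;> linarith
    calc (|a| + |b|) ^ (p - 1) ≤ (2 * max |a| |b|) ^ (p - 1) :=
          Real.rpow_le_rpow (by positivity) h1 (by linarith)
      _ = 2 ^ (p - 1) * (max |a| |b|) ^ (p - 1) :=
          Real.mul_rpow (by norm_num) (le_max_of_le_left (abs_nonneg a))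
      _ ≤ 2 ^ (p - 1) * (|a| ^ (p - 1) + |b| ^ (p - 1)) := by
          apply mul_le_mul_of_nonneg_left _ (by positivity)
          rcases max_cases |a| |b| with ⟨h, _⟩ | ⟨h, _⟩ <;> rw [h]
          · have : 0 ≤ |b| ^ (p - 1) := by positivity
            linarith
          · have : 0 ≤ |a| ^ (p - 1) := by positivity
            linarith
  have hbp : |b| ^ (p - 1) * |b| = |b| ^ p := by
    rw [← Real.rpow_add_one hbabs.ne']; ring_nf
  have hyoung := bl_young hp hδ (abs_nonneg a) hbabs
  have hδε : p * 2 ^ (p - 1) * δ = ε := by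
    rw [hδdef]; field_simp
  have e1 : 0 ≤ |b| := abs_nonneg b
  have e2 : 0 ≤ (2:ℝ) ^ (p - 1) := by positivity
  calc abs (|a + b| ^ p - |a| ^ p)
      ≤ p * (|a| + |b|) ^ (p - 1) * |b| := hmvt
    _ ≤ p * (2 ^ (p - 1) * (|a| ^ (p - 1) + |b| ^ (p - 1))) * |b| := by
        apply mul_le_mul_of_nonneg_right (mul_le_mul_of_nonneg_left hsum hp0.le) e1
    _ = p * 2 ^ (p - 1) * (|a| ^ (p - 1) * |b|) + p * 2 ^ (p - 1) * (|b| ^ (p - 1) * |b|) := by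
        ring
    _ ≤ p * 2 ^ (p - 1) * (δ * |a| ^ p + δ ^ (1 - p) * |b| ^ p)
        + p * 2 ^ (p - 1) * |b| ^ p := by
        rw [hbp]
        exact add_le_add_left (mul_le_mul_of_nonneg_left hyoung h2.le) _
    _ = ε * |a| ^ p + p * 2 ^ (p - 1) * (δ ^ (1 - p) + 1) * |b| ^ p := by
        rw [← hδε]; ring

lemma bl_int_bound {Ω : Type*} [MeasurableSpace Ω] (μ : Measure Ω) {p : ℝ} (hp : 0 < p)
    {f : Ω → ℝ} (hf : MemLp f (ENNReal.ofReal p) μ) {d : ℝ≥0∞} (hd : d ≠ ⊤)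
    (h : eLpNorm f (ENNReal.ofReal p) μ ≤ d) :
    ∫ x, |f x| ^ p ∂μ ≤ d.toReal ^ p := by
  have hq0 : ENNReal.ofReal p ≠ 0 := (ENNReal.ofReal_pos.mpr hp).ne'
  have hqt : ENNReal.ofReal p ≠ ⊤ := ENNReal.ofReal_ne_top
  rw [hf.eLpNorm_eq_integral_rpow_norm hq0 hqt] at h
  rw [ENNReal.ofReal_le_iff_le_toReal hd] at h
  have hI0 : 0 ≤ ∫ x, ‖f x‖ ^ p ∂μ :=
    integral_nonneg fun x => Real.rpow_nonneg (norm_nonneg _) _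
  have hI : ∫ x, |f x| ^ p ∂μ = ∫ x, ‖f x‖ ^ p ∂μ := by
    simp [Real.norm_eq_abs]
  rw [hI, ← Real.rpow_inv_rpow hI0 hp.ne']
  rw [ENNReal.toReal_ofReal hp.le] at h
  exact Real.rpow_le_rpow (by positivity) h hp.le

lemma bl_integrable {Ω : Type*} [MeasurableSpace Ω] (μ : Measure Ω) {p : ℝ} (hp : 0 < p)
    {f : Ω → ℝ} (hf : MemLp f (ENNReal.ofReal p) μ) :
    Integrable (fun x => |f x| ^ p) μ := by
  have := hf.integrable_norm_rpow ((ENNReal.ofReal_pos.mpr hp).ne') ENNReal.ofReal_ne_top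
  simpa [Real.norm_eq_abs, ENNReal.toReal_ofReal hp.le] using this

/-- Brezis–Lieb lemma: for a bounded sequence in L^p (1 < p < ∞) converging a.e. to u,
∫|u_k|^p − ∫|u_k − u|^p → ∫|u|^p. -/
theorem brezis_lieb {Ω : Type*} [MeasurableSpace Ω] (μ : Measure Ω) {p : ℝ} (hp : 1 < p)
    (u : ℕ → Ω → ℝ) (u₀ : Ω → ℝ)
    (hmeas : ∀ k, AEStronglyMeasurable (u k) μ) (hmeas₀ : AEStronglyMeasurable u₀ μ)
    (hb : ∃ c : ℝ≥0∞, c < ⊤ ∧ ∀ k, eLpNorm (u k) (ENNReal.ofReal p) μ ≤ c)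
    (hae : ∀ᵐ x ∂μ, Tendsto (fun k => u k x) atTop (nhds (u₀ x))) :
    Tendsto (fun k => (∫ x, |u k x| ^ p ∂μ) - ∫ x, |u k x - u₀ x| ^ p ∂μ) atTop
      (nhds (∫ x, |u₀ x| ^ p ∂μ)) := by
  have hp0 : (0:ℝ) < p := by linarith
  set q : ℝ≥0∞ := ENNReal.ofReal p with hq
  obtain ⟨c, hc, hbc⟩ := hb
  have huk : ∀ k, MemLp (u k) q μ := fun k => ⟨hmeas k, (hbc k).trans_lt hc⟩
  have h0le : eLpNorm u₀ q μ ≤ c := by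
    calc eLpNorm u₀ q μ ≤ atTop.liminf fun k => eLpNorm (u k) q μ :=
          Lp.eLpNorm_lim_le_liminf_eLpNorm hmeas u₀ hae
      _ ≤ atTop.liminf fun _ => c := Filter.liminf_le_liminf (Eventually.of_forall hbc)
      _ = c := Filter.liminf_const c
  have hu₀ : MemLp u₀ q μ := ⟨hmeas₀, h0le.trans_lt hc⟩
  have hv : ∀ k, MemLp (fun x => u k x - u₀ x) q μ := fun k => (huk k).sub hu₀
  have hq1 : (1:ℝ≥0∞) ≤ q := by
    rw [hq, ← ENNReal.ofReal_one]
    exact ENNReal.ofReal_le_ofReal hp.le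
  have hvnorm : ∀ k, eLpNorm (fun x => u k x - u₀ x) q μ ≤ 2 * c := fun k => by
    calc eLpNorm (fun x => u k x - u₀ x) q μ
        = eLpNorm (u k - u₀) q μ := rfl
      _ ≤ eLpNorm (u k) q μ + eLpNorm u₀ q μ := eLpNorm_sub_le (hmeas k) hmeas₀ hq1
      _ ≤ c + c := add_le_add (hbc k) h0le
      _ = 2 * c := (two_mul c).symm
  set M' : ℝ := (2 * c).toReal ^ p with hM'def
  have hM'0 : 0 ≤ M' := Real.rpow_nonneg ENNReal.toReal_nonneg _
  have h2c : (2 : ℝ≥0∞) * c ≠ ⊤ := ENNReal.mul_ne_top (by simp) hc.ne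
  have hMk : ∀ k, ∫ x, |u k x - u₀ x| ^ p ∂μ ≤ M' := fun k =>
    bl_int_bound μ hp0 (hv k) h2c (hvnorm k)
  -- integrability of the three basic integrands
  have Ik : ∀ k, Integrable (fun x => |u k x| ^ p) μ := fun k => bl_integrable μ hp0 (huk k)
  have Ivk : ∀ k, Integrable (fun x => |u k x - u₀ x| ^ p) μ := fun k =>
    bl_integrable μ hp0 (hv k)
  have I0 : Integrable (fun x => |u₀ x| ^ p) μ := bl_integrable μ hp0 hu₀
  rw [Metric.tendsto_atTop]
  intro ε hε
  set ε' : ℝ := ε / (2 * (M' + 1)) with hε'def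
  have hε' : 0 < ε' := by positivity
  obtain ⟨C, hC, hkey⟩ := bl_key hp hε'
  -- the pointwise inequality, rearranged
  have hptwise : ∀ k x, abs (|u k x| ^ p - |u k x - u₀ x| ^ p)
      ≤ ε' * |u k x - u₀ x| ^ p + C * |u₀ x| ^ p := fun k x => by
    have := hkey (u k x - u₀ x) (u₀ x)
    simpa using this
  set F : ℕ → Ω → ℝ := fun k x =>
    max (abs (|u k x| ^ p - |u k x - u₀ x| ^ p - |u₀ x| ^ p)
      - ε' * |u k x - u₀ x| ^ p) 0 with hFdef
  have hF0 : ∀ k x, 0 ≤ F k x := fun k x => le_max_right _ _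
  have hFbound : ∀ k x, F k x ≤ (C + 1) * |u₀ x| ^ p := fun k x => by
    have h1 := hptwise k x
    have h2 : 0 ≤ |u₀ x| ^ p := by positivity
    have h3 : abs (|u k x| ^ p - |u k x - u₀ x| ^ p - |u₀ x| ^ p)
        ≤ abs (|u k x| ^ p - |u k x - u₀ x| ^ p) + |u₀ x| ^ p := by
      have := abs_sub (|u k x| ^ p - |u k x - u₀ x| ^ p) (|u₀ x| ^ p)
      calc abs (|u k x| ^ p - |u k x - u₀ x| ^ p - |u₀ x| ^ p)
          ≤ abs (|u k x| ^ p - |u k x - u₀ x| ^ p) + abs (|u₀ x| ^ p) := abs_sub _ _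
        _ = abs (|u k x| ^ p - |u k x - u₀ x| ^ p) + |u₀ x| ^ p := by
            rw [abs_of_nonneg h2]
    apply max_le _ (by positivity)
    nlinarith
  have hFmeas : ∀ k, AEStronglyMeasurable (F k) μ := fun k => by
    have m1 : AEMeasurable (fun x => |u k x| ^ p) μ :=
      (measurable_abs.comp_aemeasurable (hmeas k).aemeasurable).pow aemeasurable_const
    have m2 : AEMeasurable (fun x => |u k x - u₀ x| ^ p) μ :=
      (measurable_abs.comp_aemeasurable
        ((hmeas k).aemeasurable.sub hmeas₀.aemeasurable)).pow aemeasurable_const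
    have m3 : AEMeasurable (fun x => |u₀ x| ^ p) μ :=
      (measurable_abs.comp_aemeasurable hmeas₀.aemeasurable).pow aemeasurable_const
    exact (((measurable_abs.comp_aemeasurable ((m1.sub m2).sub m3)).sub
      (m2.const_mul ε')).max aemeasurable_const).aestronglyMeasurable
  have hFint : ∀ k, Integrable (F k) μ := fun k =>
    Integrable.mono' (I0.const_mul (C + 1)) (hFmeas k)
      (Eventually.of_forall fun x => by
        rw [Real.norm_eq_abs, abs_of_nonneg (hF0 k x)]; exact hFbound k x)
  -- dominated convergence for F
  have htend : Tendsto (fun k => ∫ x, F k x ∂μ) atTop (nhds 0) := by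
    have hcont : Continuous fun t : ℝ => |t| ^ p :=
      continuous_abs.rpow_const fun t => Or.inr hp0.le
    have h := tendsto_integral_of_dominated_convergence
      (F := F) (f := fun _ => (0:ℝ)) (bound := fun x => (C + 1) * |u₀ x| ^ p)
      hFmeas (I0.const_mul (C + 1))
      (fun k => Eventually.of_forall fun x => by
        rw [Real.norm_eq_abs, abs_of_nonneg (hF0 k x)]; exact hFbound k x)
      ?_
    · simpa using h
    · filter_upwards [hae] with x hx
      have h1 : Tendsto (fun k => u k x - u₀ x) atTop (nhds 0) := by
        simpa using hx.sub (tendsto_const_nhds (x := u₀ x))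
      have hA : Tendsto (fun k => |u k x| ^ p) atTop (nhds (|u₀ x| ^ p)) :=
        (hcont.tendsto _).comp hx
      have hB : Tendsto (fun k => |u k x - u₀ x| ^ p) atTop (nhds 0) := by
        have := (hcont.tendsto 0).comp h1
        simpa [Real.zero_rpow hp0.ne', Function.comp_def] using this
      have : Tendsto (fun k => F k x) atTop
          (nhds (max (abs (|u₀ x| ^ p - 0 - |u₀ x| ^ p) - ε' * 0) 0)) :=
        (((hA.sub hB).sub tendsto_const_nhds).abs.sub (hB.const_mul ε')).max tendsto_const_nhds
      simpa using this
  obtain ⟨N, hN⟩ := (Metric.tendsto_atTop.mp htend) (ε / 2) (by positivity)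
  refine ⟨N, fun k hk => ?_⟩
  have hFk : ∫ x, F k x ∂μ < ε / 2 := by
    have := hN k hk
    rw [Real.dist_eq, sub_zero] at this
    exact (le_abs_self _).trans_lt this
  -- the main estimate
  have Iks : Integrable (fun x => |u k x| ^ p - |u k x - u₀ x| ^ p) μ := (Ik k).sub (Ivk k)
  have Iks2 : Integrable (fun x => |u k x| ^ p - |u k x - u₀ x| ^ p - |u₀ x| ^ p) μ :=
    Iks.sub I0
  have Iabs : Integrable (fun x => abs (|u k x| ^ p - |u k x - u₀ x| ^ p - |u₀ x| ^ p)) μ :=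
    Iks2.abs
  have hintabs : ∫ x, abs (|u k x| ^ p - |u k x - u₀ x| ^ p - |u₀ x| ^ p) ∂μ
      ≤ (∫ x, F k x ∂μ) + ε' * ∫ x, |u k x - u₀ x| ^ p ∂μ := by
    rw [← integral_const_mul, ← integral_add (hFint k) ((Ivk k).const_mul ε')]
    apply integral_mono Iabs ((hFint k).add ((Ivk k).const_mul ε'))
    intro x
    have : abs (|u k x| ^ p - |u k x - u₀ x| ^ p - |u₀ x| ^ p) - ε' * |u k x - u₀ x| ^ p
        ≤ F k x := le_max_left _ _
    simp only [Pi.add_apply]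
    linarith
  have hdist : dist ((∫ x, |u k x| ^ p ∂μ) - ∫ x, |u k x - u₀ x| ^ p ∂μ)
      (∫ x, |u₀ x| ^ p ∂μ)
      ≤ (∫ x, F k x ∂μ) + ε' * ∫ x, |u k x - u₀ x| ^ p ∂μ := by
    rw [Real.dist_eq]
    have heq : (∫ x, |u k x| ^ p ∂μ) - (∫ x, |u k x - u₀ x| ^ p ∂μ)
        - ∫ x, |u₀ x| ^ p ∂μ
        = ∫ x, (|u k x| ^ p - |u k x - u₀ x| ^ p - |u₀ x| ^ p) ∂μ := by
      rw [integral_sub Iks I0, integral_sub (Ik k) (Ivk k)]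
    rw [heq]
    calc |∫ x, (|u k x| ^ p - |u k x - u₀ x| ^ p - |u₀ x| ^ p) ∂μ|
        ≤ ∫ x, abs (|u k x| ^ p - |u k x - u₀ x| ^ p - |u₀ x| ^ p) ∂μ :=
          by
            have := norm_integral_le_integral_norm
              (fun x => |u k x| ^ p - |u k x - u₀ x| ^ p - |u₀ x| ^ p) (μ := μ)
            simpa [Real.norm_eq_abs] using this
      _ ≤ _ := hintabs
  have hε'M : ε' * ∫ x, |u k x - u₀ x| ^ p ∂μ < ε / 2 := by
    have h1 : ε' * ∫ x, |u k x - u₀ x| ^ p ∂μ ≤ ε' * M' :=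
      mul_le_mul_of_nonneg_left (hMk k) hε'.le
    have h2 : ε' * M' < ε / 2 := by
      rw [hε'def, div_mul_eq_mul_div, div_lt_div_iff₀ (by positivity) two_pos]
      nlinarith
    linarith
  calc dist ((∫ x, |u k x| ^ p ∂μ) - ∫ x, |u k x - u₀ x| ^ p ∂μ) (∫ x, |u₀ x| ^ p ∂μ)
      ≤ (∫ x, F k x ∂μ) + ε' * ∫ x, |u k x - u₀ x| ^ p ∂μ := hdist
    _ < ε / 2 + ε / 2 := add_lt_add hFk hε'M
    _ = ε := add_halves ε
end

section
/- Let H be a Hilbert space, (u_k) a bounded sequence in H, and (g_k^{(1)}), …, (g_k^{(N)}) sequences of unitary operators on H with (g_k^{(m)})^{-1} g_k^{(n)} → 0 in the weak operator topology for m ≠ n. Suppose (g_k^{(n)})^{-1} u_k ⇀ w^{(n)} for each n. Then for each n, (g_k^{(n)})^{-1} (u_k − ∑_{m=1}^N g_k^{(m)} w^{(m)}) ⇀ 0 in H. -/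
open Filter

/-- After subtracting all elementary concentrations g_k^{(m)} w^{(m)}, the remainder has
zero weak limit along each decoupled operator sequence. -/
theorem remainder_has_zero_profiles {H : Type*} [NormedAddCommGroup H]
    [InnerProductSpace ℝ H]
    (u : ℕ → H) (hb : ∃ c : ℝ, ∀ k, ‖u k‖ ≤ c)
    {N : ℕ} (g : ℕ → Fin N → (H ≃ₗᵢ[ℝ] H)) (w : Fin N → H)
    (hdec : ∀ m n : Fin N, m ≠ n → ∀ x y : H,
      Tendsto (fun k => (inner ℝ ((g k m).symm ((g k n) x)) y : ℝ)) atTop (nhds 0))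
    (hw : ∀ (n : Fin N) (x : H),
      Tendsto (fun k => (inner ℝ ((g k n).symm (u k)) x : ℝ)) atTop (nhds (inner ℝ (w n) x))) :
    ∀ (n : Fin N) (x : H),
      Tendsto (fun k => (inner ℝ ((g k n).symm (u k - ∑ m, (g k m) (w m))) x : ℝ)) atTop
        (nhds 0) := by
  intro n x
  have hsum : Tendsto (fun k => ∑ m, (inner ℝ ((g k n).symm ((g k m) (w m))) x : ℝ)) atTop
      (nhds (inner ℝ (w n) x)) := by
    have : Tendsto (fun k => ∑ m, (inner ℝ ((g k n).symm ((g k m) (w m))) x : ℝ)) atTop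
        (nhds (∑ m, if m = n then (inner ℝ (w n) x : ℝ) else 0)) := by
      apply tendsto_finset_sum
      intro m _
      by_cases hm : m = n
      · subst hm
        simp only [if_true]
        simpa using tendsto_const_nhds.congr (fun k => by
          simp [LinearIsometryEquiv.symm_apply_apply])
      · simpa [hm] using hdec n m (fun h => hm h.symm) (w m) x
    simpa using this
  have := (hw n x).sub hsum
  rw [sub_self] at this
  refine this.congr (fun k => ?_)
  simp [inner_sub_left, map_sub, inner_sum, map_sum, sum_inner]
end
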